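/- Let β ∈ Φ_lg, γ ∈ Δ, and α = s_γ(β). If (β|γ) > 0 then L(α) = L(β) + 1 (so β →_γ α); if (β|γ) = 0 then α = β; if (β|γ) < 0 then L(α) = L(β) − 1 (so α →_γ β). -/

import Mathlib

open scoped RealInnerProductSpace Classical

noncomputable section

variable {V : Type} [NormedAddCommGroup V] [InnerProductSpace ℝ V] [FiniteDimensional ℝ V]

/-- The orthogonal reflection of `V` in the hyperplane orthogonal to `α`
(the reflection `s_α` when `α` is a root). -/
def sref (α : V) : V ≃ₗᵢ[ℝ] V := Submodule.reflection (Submodule.span ℝ {α})ᗮ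

/-- The pairing `⟨β, γ∨⟩ = 2(β|γ)/(γ|γ)` of a vector with the coroot of `γ`. -/
def cpair (β γ : V) : ℝ := 2 * ⟪β, γ⟫ / ⟪γ, γ⟫

/-- An irreducible reduced (crystallographic) root system in the real inner product
space `V`, the inner product being invariant under the Weyl group (automatic, since
reflections are isometries), normalized so that the shortest roots have squared length `1`. -/
structure NRootSystem (V : Type) [NormedAddCommGroup V] [InnerProductSpace ℝ V]
    [FiniteDimensional ℝ V] where
  Φ : Finset V
  nonempty : Φ.Nonempty
  zero_not_mem : (0 : V) ∉ Φ
  span_eq_top : Submodule.span ℝ (Φ : Set V) = ⊤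
  reduced : ∀ α ∈ Φ, ∀ t : ℝ, t • α ∈ Φ → t = 1 ∨ t = -1
  pairing_int : ∀ α ∈ Φ, ∀ β ∈ Φ, ∃ n : ℤ, 2 * ⟪β, α⟫ = n * ⟪α, α⟫
  reflect_mem : ∀ α ∈ Φ, ∀ β ∈ Φ, sref α β ∈ Φ
  irreducible : ∀ S : Finset V, S ⊆ Φ → S.Nonempty → (Φ \ S).Nonempty →
    ∃ α ∈ S, ∃ β ∈ Φ \ S, ⟪α, β⟫ ≠ 0
  norm_one_le : ∀ α ∈ Φ, 1 ≤ ⟪α, α⟫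
  exists_norm_one : ∃ α ∈ Φ, ⟪α, α⟫ = 1

namespace NRootSystem

variable (R : NRootSystem V)

/-- `r`, the maximal squared length of a root. -/
def r : ℝ := R.Φ.sup' R.nonempty fun α => ⟪α, α⟫

/-- long roots -/
def IsLong (α : V) : Prop := α ∈ R.Φ ∧ ⟪α, α⟫ = R.r

/-- short roots -/
def IsShort (α : V) : Prop := α ∈ R.Φ ∧ ⟪α, α⟫ < R.r

/-- The Weyl group `W`, generated by the reflections in the roots. -/
def Weyl : Subgroup (V ≃ₗᵢ[ℝ] V) := Subgroup.closure (sref '' (R.Φ : Set V))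

end NRootSystem

/-- The standard parabolic subgroup `W_I` generated by the reflections in `I ⊆ Δ`. -/
def WeylP (I : Finset V) : Subgroup (V ≃ₗᵢ[ℝ] V) := Subgroup.closure (sref '' (I : Set V))

/-- A base (set of simple roots) `Δ` of the root system, together with the
integral coordinates `coeff γ α` of each root `γ` in the basis `Δ`; every root is a
nonnegative or a nonpositive integral combination of the simple roots. -/
structure Base {V : Type} [NormedAddCommGroup V] [InnerProductSpace ℝ V]
    [FiniteDimensional ℝ V] (R : NRootSystem V) where
  Δ : Finset V
  subset : Δ ⊆ R.Φ
  indep : LinearIndependent ℝ (fun a : {x : V // x ∈ Δ} => (a : V))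
  coeff : V → V → ℤ
  coeff_spec : ∀ γ ∈ R.Φ, γ = ∑ α ∈ Δ, (coeff γ α : ℝ) • α
  coeff_sign : ∀ γ ∈ R.Φ, (∀ α ∈ Δ, 0 ≤ coeff γ α) ∨ (∀ α ∈ Δ, coeff γ α ≤ 0)

namespace Base

variable {R : NRootSystem V} (B : Base R)

/-- positive roots -/
def IsPos (γ : V) : Prop := γ ∈ R.Φ ∧ ∀ α ∈ B.Δ, 0 ≤ B.coeff γ α

/-- negative roots -/
def IsNeg (γ : V) : Prop := γ ∈ R.Φ ∧ ∀ α ∈ B.Δ, B.coeff γ α ≤ 0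

/-- the height of a root -/
def ht (γ : V) : ℤ := ∑ α ∈ B.Δ, B.coeff γ α

/-- the dual height `ht∨ γ = ht (γ∨)`: the height of the coroot `γ∨ = 2γ/(γ|γ)`
with respect to the basis of simple coroots `α∨ = 2α/(α|α)`, `α ∈ Δ`. -/
def htv (γ : V) : ℝ := ∑ α ∈ B.Δ, (B.coeff γ α : ℝ) * ⟪α, α⟫ / ⟪γ, γ⟫

/-- The length of `w`: the minimal length of an expression of `w` as a product of
simple reflections. -/
def len (w : V ≃ₗᵢ[ℝ] V) : ℕ :=
  sInf {n | ∃ g : Fin n → V, (∀ i, g i ∈ B.Δ) ∧ w = (List.ofFn fun i => sref (g i)).prod}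

/-- `w` is the longest element of the subgroup `H`. -/
def IsLongest (H : Subgroup (V ≃ₗᵢ[ℝ] V)) (w : V ≃ₗᵢ[ℝ] V) : Prop :=
  w ∈ H ∧ ∀ u ∈ H, B.len u ≤ B.len w

/-- `X_I = {w ∈ W | w(Φ_I⁺) ⊆ Φ⁺}`, the set of minimal length coset
representatives of `W/W_I`. -/
def XI (I : Finset V) : Set (V ≃ₗᵢ[ℝ] V) :=
  {w | w ∈ R.Weyl ∧
    ∀ γ, γ ∈ R.Φ → γ ∈ Submodule.span ℝ (I : Set V) → B.IsPos γ → B.IsPos (w γ)}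

/-- `h` is the highest root. -/
def IsHighest (h : V) : Prop :=
  h ∈ R.Φ ∧ ∀ γ ∈ R.Φ, ∀ α ∈ B.Δ, B.coeff γ α ≤ B.coeff h α

/-- `Ĩ = {α ∈ Δ | (h|α) = 0}`, the simple roots orthogonal to the highest root `h`. -/
def Itil (h : V) : Finset V := B.Δ.filter fun α => ⟪h, α⟫ = 0

/-- The level `L(α)` of a long root `α`, where `h` is the highest root:
`L(α) = ht∨(h) − ht∨(α)` if `α > 0` and `L(α) = ht∨(h) − ht∨(α) − 1` if `α < 0`. -/
def level (h α : V) : ℝ :=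
  if B.IsPos α then B.htv h - B.htv α else B.htv h - B.htv α - 1

/-- The elementary step relation `β →_γ α` on long roots (`γ` a positive root):
`α = s_γ(β)` and `L(α) = L(β) + 1`. -/
def Step (h γ β α : V) : Prop :=
  R.IsLong β ∧ R.IsLong α ∧ B.IsPos γ ∧ α = sref γ β ∧
    B.level h α = B.level h β + 1

/-- `g` is the sequence of positive roots of a path
`β = β₀ →_{g 0} β₁ →_{g 1} ⋯ →_{g (n-1)} β_n = α` from `β` to `α`. -/
def IsPathWord (h : V) {n : ℕ} (g : Fin n → V) (β α : V) : Prop :=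
  ∃ c : Fin (n + 1) → V, c 0 = β ∧ c (Fin.last n) = α ∧
    ∀ i : Fin n, B.Step h (g i) (c i.castSucc) (c i.succ)

/-- a path all of whose steps use simple roots -/
def IsSimplePathWord (h : V) {n : ℕ} (g : Fin n → V) (β α : V) : Prop :=
  B.IsPathWord h g β α ∧ ∀ i, g i ∈ B.Δ

/-- there is a path from `β` to `α`, i.e. `α ⪯ β` -/
def HasPath (h β α : V) : Prop := ∃ (n : ℕ) (g : Fin n → V), B.IsPathWord h g β α

/-- there is a simple path from `β` to `α` -/
def HasSimplePath (h β α : V) : Prop :=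
  ∃ (n : ℕ) (g : Fin n → V), B.IsSimplePathWord h g β α

/-- The covering relation `w →_γ w'` for the Bruhat order:
`w' = s_γ w` and `l(w') = l(w) + 1`, for a positive root `γ`. -/
def BStep (γ : V) (w w' : V ≃ₗᵢ[ℝ] V) : Prop :=
  B.IsPos γ ∧ w' = sref γ * w ∧ B.len w' = B.len w + 1

/-- The Bruhat order on `W`: the reflexive–transitive closure of the covering
relations. -/
def bruhatLE : (V ≃ₗᵢ[ℝ] V) → (V ≃ₗᵢ[ℝ] V) → Prop :=
  Relation.ReflTransGen fun w w' => ∃ γ, B.BStep γ w w'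

/-- `x` is an element of `W` with `x(β) = α` of the minimal possible length
`|L(α) − L(β)|` (this is the element `x_{αβ}` when it exists). -/
def MinTake (h β α : V) (x : V ≃ₗᵢ[ℝ] V) : Prop :=
  x ∈ R.Weyl ∧ x β = α ∧ (B.len x : ℝ) = |B.level h α - B.level h β|

/-- `g` is a reduced expression of `x` as a product of simple reflections. -/
def IsReducedWord {n : ℕ} (g : Fin n → V) (x : V ≃ₗᵢ[ℝ] V) : Prop :=
  (∀ i, g i ∈ B.Δ) ∧ x = (List.ofFn fun i => sref (g i)).prod ∧ n = B.len x

/-- The depth of a positive root `β`: the minimal integer `k` such that there is an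
element `w` of `W` of length `k` with `w(β) < 0`. -/
def depth (β : V) : ℕ := sInf {n | ∃ w ∈ R.Weyl, B.len w = n ∧ B.IsNeg (w β)}

end Base

section Aux

variable {R : NRootSystem V}

lemma sref_apply' (γ β : V) :
    sref γ β = β - (2 * ⟪β, γ⟫ / ⟪γ, γ⟫) • γ := by
  rcases eq_or_ne γ 0 with rfl | hγ
  · simp only [smul_zero, sub_zero, sref]
    exact Submodule.reflection_mem_subspace_eq_self (by simp)
  · rw [sref, Submodule.reflection_orthogonal_apply, Submodule.reflection_singleton_apply]
    rw [real_inner_self_eq_norm_sq, real_inner_comm]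
    simp only [RCLike.ofReal_real_eq_id, id, two_smul]
    match_scalars <;> ring

lemma sref_sref (γ β : V) : sref γ (sref γ β) = β :=
  Submodule.reflection_reflection _ β

lemma NRootSystem.r_pos (R : NRootSystem V) : 0 < R.r := by
  obtain ⟨a, ha, h1⟩ := R.exists_norm_one
  calc (0:ℝ) < 1 := one_pos
  _ ≤ ⟪a, a⟫ := R.norm_one_le a ha
  _ ≤ R.r := Finset.le_sup' (f := fun x => ⟪x, x⟫) ha

lemma NRootSystem.inner_le_r (R : NRootSystem V) {a : V} (ha : a ∈ R.Φ) : ⟪a, a⟫ ≤ R.r :=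
  Finset.le_sup' (f := fun x => ⟪x, x⟫) ha

lemma Base.coeff_unique (B : Base R) {x : V} (hx : x ∈ R.Φ)
    (c : V → ℤ) (hc : x = ∑ δ ∈ B.Δ, (c δ : ℝ) • δ) : ∀ δ ∈ B.Δ, B.coeff x δ = c δ := by
  have h0 : ∑ δ ∈ B.Δ, ((B.coeff x δ - c δ : ℤ) : ℝ) • δ = 0 := by
    push_cast
    simp only [sub_smul, Finset.sum_sub_distrib]
    rw [← B.coeff_spec x hx, ← hc, sub_self]
  have h2 : ∑ a : {y : V // y ∈ B.Δ}, ((B.coeff x a - c a : ℤ) : ℝ) • (a : V) = 0 := by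
    rw [← h0]
    exact Finset.sum_coe_sort B.Δ (fun δ => ((B.coeff x δ - c δ : ℤ) : ℝ) • δ)
  have h3 := Fintype.linearIndependent_iff.mp B.indep _ h2
  intro δ hδ
  have h4 := h3 ⟨δ, hδ⟩
  have h5 : (B.coeff x δ - c δ : ℤ) = 0 := by exact_mod_cast h4
  omega

lemma Base.coeff_base (B : Base R) {γ : V} (hγ : γ ∈ B.Δ) :
    ∀ δ ∈ B.Δ, B.coeff γ δ = if δ = γ then 1 else 0 := by
  apply B.coeff_unique (B.subset hγ)
  have h1 : ∀ δ : V, (((if δ = γ then (1:ℤ) else 0) : ℤ) : ℝ) • δ = if δ = γ then δ else 0 := by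
    intro δ; split <;> simp
  simp only [h1]
  rw [Finset.sum_ite_eq' B.Δ γ (fun δ => δ), if_pos hγ]

lemma Base.isPos_base (B : Base R) {γ : V} (hγ : γ ∈ B.Δ) : B.IsPos γ := by
  refine ⟨B.subset hγ, fun δ hδ => ?_⟩
  rw [B.coeff_base hγ δ hδ]
  split <;> omega

lemma Base.key (B : Base R) {h β γ : V} (hβ : R.IsLong β) (hγ : γ ∈ B.Δ)
    (hpos : 0 < ⟪β, γ⟫) :
    B.level h (sref γ β) = B.level h β + 1 ∧ B.Step h γ β (sref γ β) := by
  have hβΦ := hβ.1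
  have hγΦ := B.subset hγ
  have hγγ : (0:ℝ) < ⟪γ, γ⟫ := lt_of_lt_of_le one_pos (R.norm_one_le γ hγΦ)
  have hr : ⟪β, β⟫ = R.r := hβ.2
  have hrpos := R.r_pos
  have hαΦ : sref γ β ∈ R.Φ := R.reflect_mem γ hγΦ β hβΦ
  have hαβ : ⟪sref γ β, sref γ β⟫ = ⟪β, β⟫ := (sref γ).inner_map_map β β
  have hαlong : R.IsLong (sref γ β) := ⟨hαΦ, by rw [hαβ, hr]⟩
  obtain ⟨n, hn⟩ := R.pairing_int γ hγΦ β hβΦ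
  have happ : sref γ β = β - (n:ℝ) • γ := by
    rw [sref_apply', hn, mul_div_assoc, div_self (ne_of_gt hγγ), mul_one]
  have hγsum : ⟪γ, γ⟫ ≤ R.r := R.inner_le_r hγΦ
  by_cases hbg : β = γ
  · subst hbg
    have hng : sref β β = -β := by
      rw [sref_apply', mul_div_assoc, div_self (ne_of_gt hγγ), mul_one]
      module
    have hcneg : ∀ δ ∈ B.Δ, B.coeff (-β) δ = -(if δ = β then 1 else 0) := by
      apply B.coeff_unique (hng ▸ hαΦ)
      have h1 : ∀ δ : V, ((-(if δ = β then (1:ℤ) else 0) : ℤ) : ℝ) • δ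
          = -(if δ = β then δ else 0) := by
        intro δ; split <;> simp
      simp only [h1, Finset.sum_neg_distrib]
      rw [Finset.sum_ite_eq' B.Δ β (fun δ => δ), if_pos hγ]
    have htvγ : B.htv β = 1 := by
      rw [Base.htv]
      have h1 : ∀ δ ∈ B.Δ, (B.coeff β δ : ℝ) * ⟪δ, δ⟫ / ⟪β, β⟫
          = if δ = β then ⟪β, β⟫ / ⟪β, β⟫ else 0 := by
        intro δ hδ; rw [B.coeff_base hγ δ hδ]
        split_ifs with hc
        · subst hc; push_cast; ring
        · push_cast; ring
      rw [Finset.sum_congr rfl h1, Finset.sum_ite_eq' B.Δ β _, if_pos hγ,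
        div_self (ne_of_gt hγγ)]
    have htvnγ : B.htv (-β) = -1 := by
      rw [Base.htv]
      have h1 : ∀ δ ∈ B.Δ, (B.coeff (-β) δ : ℝ) * ⟪δ, δ⟫ / ⟪(-β : V), -β⟫
          = if δ = β then -(⟪β, β⟫ / ⟪β, β⟫) else 0 := by
        intro δ hδ; rw [hcneg δ hδ, inner_neg_neg]
        split_ifs with hc
        · subst hc; push_cast; ring
        · push_cast; ring
      rw [Finset.sum_congr rfl h1, Finset.sum_ite_eq' B.Δ β _, if_pos hγ,
        div_self (ne_of_gt hγγ)]
    have hnp : ¬ B.IsPos (-β) := by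
      intro hp
      have h1 := hp.2 β hγ
      rw [hcneg β hγ, if_pos rfl] at h1
      omega
    have hlev : B.level h (sref β β) = B.level h β + 1 := by
      rw [hng, Base.level, Base.level, if_neg hnp, if_pos (B.isPos_base hγ), htvγ, htvnγ]
      ring
    exact ⟨hlev, ⟨hγΦ, hr⟩, hαlong, B.isPos_base hγ, rfl, hlev⟩
  · obtain ⟨m, hm⟩ := R.pairing_int β hβΦ γ hγΦ
    have hm' : (m:ℝ) * R.r = 2 * ⟪β, γ⟫ := by
      rw [← hr, ← hm, real_inner_comm]
    have hm1 : 1 ≤ m := by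
      have h1 : (0:ℝ) < m := by nlinarith
      have h2 : (0:ℤ) < m := by exact_mod_cast h1
      omega
    have hsub : ⟪β - γ, β - γ⟫ = R.r - (m:ℝ) * R.r + ⟪γ, γ⟫ := by
      rw [real_inner_sub_sub_self]
      linarith
    have hm2 : m ≤ 2 := by
      have h0 : (0:ℝ) ≤ ⟪β - γ, β - γ⟫ := real_inner_self_nonneg
      have h1 : (m:ℝ) ≤ 2 := by nlinarith
      exact_mod_cast h1
    have hmne2 : m ≠ 2 := by
      intro h2
      apply hbg
      have h0 : ⟪β - γ, β - γ⟫ = 0 := by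
        refine le_antisymm ?_ real_inner_self_nonneg
        rw [hsub, h2]
        push_cast
        linarith
      have h3 : β - γ = 0 := inner_self_eq_zero.mp h0
      exact sub_eq_zero.mp h3
    have hm1' : m = 1 := by omega
    have hrel : (n:ℝ) * ⟪γ, γ⟫ = R.r := by
      subst hm1'
      push_cast at hm'
      linarith [hn]
    have hcoeff : ∀ δ ∈ B.Δ, B.coeff (sref γ β) δ
        = B.coeff β δ - (if δ = γ then n else 0) := by
      apply B.coeff_unique hαΦ
      have hcast : ∀ δ : V, ((B.coeff β δ - (if δ = γ then n else 0) : ℤ) : ℝ)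
          = (B.coeff β δ : ℝ) - (if δ = γ then (n:ℝ) else 0) := by
        intro δ; split <;> push_cast <;> ring
      simp only [hcast, sub_smul, Finset.sum_sub_distrib, ite_smul, zero_smul]
      rw [Finset.sum_ite_eq' B.Δ γ (fun δ => (n:ℝ) • δ), if_pos hγ,
        ← B.coeff_spec β hβΦ, happ]
    have hδ0 : ∃ δ ∈ B.Δ, δ ≠ γ ∧ B.coeff β δ ≠ 0 := by
      by_contra hcon
      push_neg at hcon
      have hβγ : β = (B.coeff β γ : ℝ) • γ := by
        conv_lhs => rw [B.coeff_spec β hβΦ]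
        refine Finset.sum_eq_single γ (fun b hb hbne => ?_) (fun habs => absurd hγ habs)
        rw [hcon b hb hbne]
        simp
      rcases R.reduced γ hγΦ _ (hβγ ▸ hβΦ) with h1 | h1
      · apply hbg
        rw [hβγ, h1, one_smul]
      · rw [hβγ, h1] at hpos
        rw [real_inner_smul_left] at hpos
        nlinarith
    obtain ⟨δ₀, hδ₀Δ, hδ₀γ, hδ₀ne⟩ := hδ0
    have hceq : B.coeff (sref γ β) δ₀ = B.coeff β δ₀ := by
      rw [hcoeff δ₀ hδ₀Δ, if_neg hδ₀γ, sub_zero]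
    have hiff : B.IsPos (sref γ β) ↔ B.IsPos β := by
      constructor
      · intro hp
        refine ⟨hβΦ, ?_⟩
        rcases B.coeff_sign β hβΦ with hs | hs
        · exact hs
        · exfalso
          have h1 := hp.2 δ₀ hδ₀Δ
          rw [hceq] at h1
          have h2 := hs δ₀ hδ₀Δ
          omega
      · intro hp
        refine ⟨hαΦ, ?_⟩
        rcases B.coeff_sign _ hαΦ with hs | hs
        · exact hs
        · exfalso
          have h1 := hp.2 δ₀ hδ₀Δ
          have h2 := hs δ₀ hδ₀Δ
          rw [hceq] at h2
          omega
    have hhtv : B.htv β - B.htv (sref γ β) = 1 := by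
      rw [Base.htv, Base.htv, hαβ, hr, ← Finset.sum_sub_distrib]
      have h1 : ∀ δ ∈ B.Δ, (B.coeff β δ : ℝ) * ⟪δ, δ⟫ / R.r
          - (B.coeff (sref γ β) δ : ℝ) * ⟪δ, δ⟫ / R.r
          = if δ = γ then (n:ℝ) * ⟪δ, δ⟫ / R.r else 0 := by
        intro δ hδ
        rw [hcoeff δ hδ]
        split_ifs with hc <;> push_cast <;> ring
      rw [Finset.sum_congr rfl h1, Finset.sum_ite_eq' B.Δ γ _, if_pos hγ, hrel,
        div_self (ne_of_gt hrpos)]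
    have hlev : B.level h (sref γ β) = B.level h β + 1 := by
      by_cases hp : B.IsPos β
      · rw [Base.level, Base.level, if_pos (hiff.mpr hp), if_pos hp]
        linarith
      · rw [Base.level, Base.level, if_neg (fun hq => hp (hiff.mp hq)), if_neg hp]
        linarith
    exact ⟨hlev, hβ, hαlong, B.isPos_base hγ, rfl, hlev⟩

end Aux


/-- for a long root `β`, a simple root `γ` and `α = s_γ(β)`:
if `(β|γ) > 0` then `L(α) = L(β) + 1` (so `β →_γ α`); if `(β|γ) = 0` then `α = β`;
if `(β|γ) < 0` then `L(α) = L(β) − 1` (so `α →_γ β`). -/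
theorem level_action_of_simple (R : NRootSystem V) (B : Base R) {h : V}
    (hh : B.IsHighest h) {β γ α : V}
    (hβ : R.IsLong β) (hγ : γ ∈ B.Δ) (hα : α = sref γ β) :
    (0 < ⟪β, γ⟫ → B.level h α = B.level h β + 1 ∧ B.Step h γ β α) ∧
    (⟪β, γ⟫ = 0 → α = β) ∧
    (⟪β, γ⟫ < 0 → B.level h α = B.level h β - 1 ∧ B.Step h γ α β) := by
  subst hα
  have hγΦ := B.subset hγ
  have hγγ : (0:ℝ) < ⟪γ, γ⟫ := lt_of_lt_of_le one_pos (R.norm_one_le γ hγΦ)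
  refine ⟨fun hpos => B.key hβ hγ hpos, fun h0 => ?_, fun hneg => ?_⟩
  · rw [sref_apply', h0]
    simp
  · have hαΦ : sref γ β ∈ R.Φ := R.reflect_mem γ hγΦ β hβ.1
    have hαlong : R.IsLong (sref γ β) :=
      ⟨hαΦ, by rw [(sref γ).inner_map_map β β]; exact hβ.2⟩
    have hip : ⟪sref γ β, γ⟫ = -⟪β, γ⟫ := by
      rw [sref_apply', inner_sub_left, real_inner_smul_left,
        div_mul_cancel₀ _ (ne_of_gt hγγ)]
      ring
    have h2 := B.key (h := h) hαlong hγ (by rw [hip]; linarith)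
    rw [sref_sref] at h2
    exact ⟨by linarith [h2.1], h2.2⟩
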